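/- Let B be a Boolean ring and G a nontrivial abelian torsion 2-group. Then the group ring B[G] is weakly nil-clean. -/

import Mathlib

def IsWeaklyNilClean (R : Type*) [CommRing R] : Prop :=
  ∀ a : R, ∃ n e : R, IsNilpotent n ∧ IsIdempotentElem e ∧ (a = n + e ∨ a = n - e)

lemma pow2_add_char2 {R : Type*} [CommRing R] (h2 : (2 : R) = 0) (n : ℕ) (x y : R) :
    (x + y) ^ (2 ^ n) = x ^ (2 ^ n) + y ^ (2 ^ n) := by
  induction n with
  | zero => simp
  | succ n ih =>
    have hsq : ∀ u v : R, (u + v) ^ 2 = u ^ 2 + v ^ 2 := by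
      intro u v
      have : (u + v) ^ 2 = u ^ 2 + v ^ 2 + 2 * (u * v) := by ring
      rw [this, h2]; ring
    rw [pow_succ, pow_mul, ih, hsq, ← pow_mul, ← pow_mul, ← pow_succ]

lemma pow2_sum_char2 {R : Type*} [CommRing R] (h2 : (2 : R) = 0) (n : ℕ) {ι : Type*}
    (s : Finset ι) (f : ι → R) :
    (∑ i ∈ s, f i) ^ (2 ^ n) = ∑ i ∈ s, f i ^ (2 ^ n) := by
  classical
  induction s using Finset.induction with
  | empty => simp [zero_pow (pow_ne_zero n (two_ne_zero))]
  | insert _ _ h ih =>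
    rw [Finset.sum_insert h, Finset.sum_insert h, pow2_add_char2 h2, ih]

lemma bool_pow2 {B : Type*} [CommRing B] (hB : ∀ x : B, x * x = x) (m : ℕ) (b : B) :
    b ^ (2 ^ m) = b := by
  induction m with
  | zero => simp
  | succ m ih =>
    rw [pow_succ, pow_mul, ih, sq, hB]

theorem boolean_group_ring_weakly_nil_clean (B : Type*) [CommRing B]
    (hB : ∀ x : B, x * x = x) (G : Type*) [CommGroup G] [Nontrivial G]
    (hG : ∀ g : G, ∃ n : ℕ, g ^ (2 ^ n) = 1) :
    IsWeaklyNilClean (MonoidAlgebra B G) := by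
  classical
  have h2B : (2 : B) = 0 := by linear_combination hB 2
  have h2 : (2 : MonoidAlgebra B G) = 0 := by
    rw [show (2 : MonoidAlgebra B G) = algebraMap B _ 2 from (map_ofNat _ 2).symm, h2B,
      map_zero]
  intro a
  set N : ℕ := a.coeff.support.sup (fun g => (hG g).choose) with hN
  have hgN : ∀ g ∈ a.coeff.support, g ^ (2 ^ N) = 1 := by
    intro g hg
    have hn : (hG g).choose ≤ N := Finset.le_sup (f := fun g => (hG g).choose) hg
    have : (2 : ℕ) ^ N = 2 ^ (hG g).choose * 2 ^ (N - (hG g).choose) := by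
      rw [← pow_add, Nat.add_sub_cancel' hn]
    rw [this, pow_mul, (hG g).choose_spec, one_pow]
  set c : B := ∑ g ∈ a.coeff.support, a.coeff g with hc
  set e : MonoidAlgebra B G := MonoidAlgebra.single 1 c with he
  have hee : IsIdempotentElem e := by
    rw [IsIdempotentElem, he, MonoidAlgebra.single_mul_single, mul_one, hB]
  have haN : a ^ (2 ^ N) = e := by
    conv_lhs => rw [← MonoidAlgebra.sum_coeff_single a, Finsupp.sum]
    rw [pow2_sum_char2 h2]
    have : ∀ g ∈ a.coeff.support,
        (MonoidAlgebra.single g (a.coeff g)) ^ (2 ^ N) = MonoidAlgebra.single 1 (a.coeff g) := by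
      intro g hg
      rw [MonoidAlgebra.single_pow, hgN g hg, bool_pow2 hB]
    rw [Finset.sum_congr rfl this, he, hc]
    exact (map_sum (MonoidAlgebra.singleAddHom 1) _ _).symm
  have heneg : a - e = a + e := by
    have hpe : e + e = 0 := by rw [← two_mul, h2, zero_mul]
    rw [sub_eq_add_neg, neg_eq_of_add_eq_zero_left hpe]
  refine ⟨a - e, e, ⟨2 ^ N, ?_⟩, hee, Or.inl (by ring)⟩
  rw [heneg, pow2_add_char2 h2, haN, MonoidAlgebra.single_pow, one_pow, bool_pow2 hB,
    ← he, ← two_mul, h2, zero_mul]
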